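/- Let K[x_1,...,x_m] be graded by ℤ^{m-n} (0 < n < m) with deg x_i = w_i, such that w_1,...,w_{m-n} form a ℤ-basis of ℤ^{m-n} and each w_j for j > m-n is a non-positive integer combination of w_1,...,w_{m-n}. Let the torus T = (K^×)^{m-n} act on K^m by t · x = (χ^{w_1}(t)x_1, ..., χ^{w_m}(t)x_m), and let G_a^n act by x_{m-n+i} ↦ x_{m-n+i} + s_i · (monomial in x_1,...,x_{m-n} of degree -w_{m-n+i}) for i = 1,...,n. Then the stabilizer of the point (1,1,...,1) ∈ K^m in the group G_a^n × T is trivial, and hence its orbit is open (dense) in K^m. -/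

import Mathlib

private def chiHom {K : Type*} [Field K] {q : ℕ} (u : Fin q → Kˣ) :
    (Fin q → ℤ) →ₗ[ℤ] Additive Kˣ where
  toFun v := Additive.ofMul (∏ k, u k ^ v k)
  map_add' v₁ v₂ := by
    simp only [Pi.add_apply, zpow_add]
    rw [Finset.prod_mul_distrib]
    rfl
  map_smul' c v := by
    simp only [Pi.smul_apply, smul_eq_mul, eq_intCast, Int.cast_id]
    rw [← ofMul_zpow, ← Finset.prod_zpow]
    exact congrArg Additive.ofMul
      (Finset.prod_congr rfl fun k _ => by rw [mul_comm, zpow_mul])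

private lemma chi_single {K : Type*} [Field K] {q : ℕ} (u : Fin q → Kˣ) (j : Fin q) :
    (∏ k, u k ^ ((Pi.single j 1 : Fin q → ℤ) k)) = u j := by
  rw [Finset.prod_eq_single j]
  · simp
  · intro k _ hk
    simp [Pi.single_apply, hk]
  · simp



/-- Let `K[x_1, …, x_m]` (`m = q + n`, `q = m - n`) be graded by `ℤ^q`
with `deg x_j = w j`, where `w` of the first `q` variables forms a `ℤ`-basis of `ℤ^q` and
each remaining `w (q+i) = -∑_k a i k • w k` is a non-positive integer combination of the
basis (`a i k ∈ ℕ`).  Let the torus `T = (K^×)^q` act by `t · x = (χ^{w_j}(t) x_j)_j` and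
`G_a^n` act by `x_{q+i} ↦ x_{q+i} + s_i ∏_k x_k^{a i k}` (the monomial in
`x_1, …, x_q` of degree `-w_{q+i}`); `act s t x` is the composite `s · (t · x)`.  Then the
stabilizer of `(1, …, 1)` in `G_a^n × T` is trivial, and its orbit is the (Zariski open
dense) set where the first `q` coordinates are nonzero. -/
theorem stmt_16 (K : Type*) [Field K] [CharZero K] [IsAlgClosed K]
    (q n : ℕ) (hq : 0 < q) (hn : 0 < n)
    (w : Fin (q + n) → Fin q → ℤ) (a : Fin n → Fin q → ℕ)
    (hbasis : ∃ b : Module.Basis (Fin q) ℤ (Fin q → ℤ), ∀ k : Fin q, b k = w (Fin.castAdd n k))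
    (hw : ∀ i : Fin n,
      w (Fin.natAdd q i) = -∑ k, (a i k : ℤ) • w (Fin.castAdd n k)) :
    let χ : (Fin q → Kˣ) → (Fin q → ℤ) → Kˣ := fun t v => ∏ k, t k ^ v k
    let act : (Fin n → K) → (Fin q → Kˣ) → (Fin (q + n) → K) → Fin (q + n) → K :=
      fun s t x j =>
        if h : (j : ℕ) < q then (χ t (w j) : K) * x j
        else (χ t (w j) : K) * x j +
          s ⟨(j : ℕ) - q, by have := j.isLt; omega⟩ *
            ∏ k : Fin q, ((χ t (w (Fin.castAdd n k)) : K) * x (Fin.castAdd n k)) ^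
              (a ⟨(j : ℕ) - q, by have := j.isLt; omega⟩ k)
    (∀ (s : Fin n → K) (t : Fin q → Kˣ),
      act s t (fun _ => 1) = (fun _ => 1) → s = 0 ∧ t = 1) ∧
    ({x | ∃ s t, x = act s t fun _ => 1}
      = {x : Fin (q + n) → K | ∀ k : Fin q, x (Fin.castAdd n k) ≠ 0}) := by
  intro χ act
  obtain ⟨b, hb⟩ := hbasis
  have hchi_one : ∀ v, χ 1 v = 1 := by intro v; simp [χ]
  constructor
  · intro s t h
    have ht : t = 1 := by
      have h1 : ∀ k : Fin q, χ t (w (Fin.castAdd n k)) = 1 := by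
        intro k
        have h2 := congrFun h (Fin.castAdd n k)
        simp only [act] at h2
        have hlt : ((Fin.castAdd n k : Fin (q + n)) : ℕ) < q := k.isLt
        rw [dif_pos hlt, mul_one] at h2
        exact Units.val_eq_one.mp h2
      have hzero : chiHom t = 0 := by
        apply b.ext
        intro k
        rw [hb k]
        show Additive.ofMul (χ t (w (Fin.castAdd n k))) = 0
        rw [h1 k]
        rfl
      funext j
      have h3 : Additive.ofMul (∏ k, t k ^ ((Pi.single j 1 : Fin q → ℤ) k)) = 0 := by
        have := DFunLike.congr_fun hzero (Pi.single j 1 : Fin q → ℤ)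
        simp only [LinearMap.zero_apply] at this
        exact this
      rw [chi_single t j] at h3
      exact Units.ext (congrArg Units.val (ofMul_eq_zero.mp h3))
    subst ht
    refine ⟨funext fun i => ?_, rfl⟩
    have h2 := congrFun h (Fin.natAdd q i)
    simp only [act] at h2
    rw [dif_neg (by simp)] at h2
    simp only [hchi_one, Units.val_one, one_mul, mul_one, one_pow,
      Finset.prod_const_one, Fin.coe_natAdd, add_tsub_cancel_left, Fin.eta] at h2
    exact add_eq_left.mp h2
  · ext x
    simp only [Set.mem_setOf_eq]
    constructor
    · rintro ⟨s, t, rfl⟩ k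
      simp only [act]
      have hlt : ((Fin.castAdd n k : Fin (q + n)) : ℕ) < q := k.isLt
      rw [dif_pos hlt, mul_one]
      exact (χ t (w (Fin.castAdd n k))).ne_zero
    · intro hx
      set u : Fin q → Kˣ := fun k => Units.mk0 _ (hx k) with hu
      set t : Fin q → Kˣ := fun j => ∏ l, u l ^ ((b.repr (Pi.single j 1)) l) with htdef
      have hkey : chiHom t = (chiHom u).comp
          ((Finsupp.lcoeFun).comp (b.repr : (Fin q → ℤ) →ₗ[ℤ] (Fin q →₀ ℤ))) := by
        apply (Pi.basisFun ℤ (Fin q)).ext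
        intro j
        simp only [Pi.basisFun_apply, LinearMap.comp_apply]
        have hL : chiHom t (Pi.single j 1) = Additive.ofMul (t j) :=
          congrArg Additive.ofMul (chi_single t j)
        rw [hL]
        rfl
      have hchix : ∀ k : Fin q, (χ t (w (Fin.castAdd n k)) : K) = x (Fin.castAdd n k) := by
        intro k
        have h5 := DFunLike.congr_fun hkey (b k)
        simp only [LinearMap.comp_apply, LinearEquiv.coe_coe, Module.Basis.repr_self,
          Finsupp.lcoeFun_apply] at h5
        rw [hb k] at h5
        have h6 : χ t (w (Fin.castAdd n k)) = u k := by
          have h7 : chiHom u (Finsupp.lcoeFun (R := ℤ) (Finsupp.single k (1:ℤ)))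
              = Additive.ofMul (u k) := by
            have he : (Finsupp.lcoeFun (R := ℤ) (Finsupp.single k (1:ℤ)) : Fin q → ℤ)
                = Pi.single k 1 := Finsupp.single_eq_pi_single k 1
            rw [he]
            exact congrArg Additive.ofMul (chi_single u k)
          exact Additive.ofMul.injective (h5.trans h7)
        rw [h6]
        rfl
      refine ⟨fun i => (x (Fin.natAdd q i) - (χ t (w (Fin.natAdd q i)) : K)) /
          ∏ k, (x (Fin.castAdd n k)) ^ (a i k), t, ?_⟩
      funext j
      by_cases hj : (j : ℕ) < q
      · obtain ⟨k, rfl⟩ : ∃ k : Fin q, j = Fin.castAdd n k :=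
          ⟨⟨(j : ℕ), hj⟩, Fin.ext rfl⟩
        simp only [act]
        rw [dif_pos (show ((Fin.castAdd n k : Fin (q + n)) : ℕ) < q from k.isLt), mul_one,
          hchix]
      · obtain ⟨i, rfl⟩ : ∃ i : Fin n, j = Fin.natAdd q i :=
          ⟨⟨(j : ℕ) - q, by have := j.isLt; omega⟩, Fin.ext (by simp; omega)⟩
        simp only [act]
        rw [dif_neg (by simp)]
        simp only [Fin.coe_natAdd, add_tsub_cancel_left, Fin.eta, mul_one]
        have hM : (∏ k, ((χ t (w (Fin.castAdd n k)) : K)) ^ (a i k))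
            = ∏ k, (x (Fin.castAdd n k)) ^ (a i k) :=
          Finset.prod_congr rfl fun k _ => by rw [hchix]
        have hMne : (∏ k, (x (Fin.castAdd n k)) ^ (a i k)) ≠ 0 :=
          Finset.prod_ne_zero_iff.2 fun k _ => pow_ne_zero _ (hx k)
        rw [hM, div_mul_cancel₀ _ hMne]
        ring
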